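/- Let E be an elliptic curve over an algebraically closed field k. Then the standard affine coordinate ring k[E] (functions regular away from the origin O) is not replete: the trivial ideal class of k[E] is not represented by any nonzero prime ideal. -/

import Mathlib

open Polynomial Ideal

/-- Let `E` be an elliptic curve over an algebraically closed field `k`.  Then the
standard affine coordinate ring `k[E]` (functions regular away from the origin, i.e. the
affine coordinate ring of a Weierstrass model) is not replete: the trivial ideal class is
not represented by any nonzero prime ideal; equivalently, no nonzero prime ideal of
`k[E]` is principal. -/
theorem elliptic_coordinateRing_not_replete (k : Type*) [Field k] [IsAlgClosed k]
    (E : WeierstrassCurve k) [E.IsElliptic] (P : Ideal E.toAffine.CoordinateRing)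
    (hP : P.IsPrime) (hP0 : P ≠ ⊥) : ¬ P.IsPrincipal := by
  haveI := hP
  let W := E.toAffine
  rintro ⟨p, hp⟩
  have hp0 : p ≠ 0 := by
    rintro rfl
    exact hP0 (hp.trans (Submodule.span_zero_singleton _))
  -- `W.CoordinateRing` is finite, hence integral, over `k[X]`.
  have hfin : Module.Finite k[X] W.CoordinateRing :=
    Module.Finite.of_basis (WeierstrassCurve.Affine.CoordinateRing.basis W)
  have hint : Algebra.IsIntegral k[X] W.CoordinateRing := Algebra.IsIntegral.of_finite _ _
  -- The contraction of `P` to `k[X]` is a nonzero prime ideal, hence maximal; hence `P` is maximal.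
  have hpmem : p ∈ P := by rw [hp]; exact Ideal.mem_span_singleton_self p
  have hcomap : P.comap (algebraMap k[X] W.CoordinateRing) ≠ ⊥ :=
    Ideal.comap_ne_bot_of_integral_mem hp0 hpmem (Algebra.IsIntegral.isIntegral p)
  have hcprime : (P.comap (algebraMap k[X] W.CoordinateRing)).IsPrime := inferInstance
  have hcmax : (P.comap (algebraMap k[X] W.CoordinateRing)).IsMaximal :=
    IsPrime.to_maximal_ideal hcomap
  have hPmax : P.IsMaximal := Ideal.isMaximal_of_isIntegral_of_isMaximal_comap P hcmax
  -- The quotient field `W.CoordinateRing ⧸ P` is a finitely generated `k`-algebra, hence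
  -- finite over `k` by the Nullstellensatz, hence equal to `k` since `k` is algebraically closed.
  letI : Field (W.CoordinateRing ⧸ P) := Ideal.Quotient.field P
  have hftR : Algebra.FiniteType k W.CoordinateRing := by
    have h1 : Algebra.FiniteType k (Polynomial k[X]) :=
      inferInstance
    exact Algebra.FiniteType.of_surjective (Ideal.Quotient.mkₐ k _)
      (Ideal.Quotient.mkₐ_surjective k _)
  have hftQ : Algebra.FiniteType k (W.CoordinateRing ⧸ P) :=
    Algebra.FiniteType.of_surjective (Ideal.Quotient.mkₐ k P)
      (Ideal.Quotient.mkₐ_surjective k P)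
  have hfinQ : Module.Finite k (W.CoordinateRing ⧸ P) :=
    finite_of_finite_type_of_isJacobsonRing k _
  have hintQ : Algebra.IsIntegral k (W.CoordinateRing ⧸ P) := Algebra.IsIntegral.of_finite _ _
  have hsurj : Function.Surjective (algebraMap k (W.CoordinateRing ⧸ P)) :=
    IsAlgClosed.algebraMap_bijective_of_isIntegral.2
  have hinj : Function.Injective (algebraMap k (W.CoordinateRing ⧸ P)) :=
    (algebraMap k (W.CoordinateRing ⧸ P)).injective
  let e : k ≃ₐ[k] (W.CoordinateRing ⧸ P) :=
    AlgEquiv.ofBijective (Algebra.ofId k _) ⟨hinj, hsurj⟩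
  have hfr1 : Module.finrank k (W.CoordinateRing ⧸ P) = 1 := by
    rw [← e.toLinearEquiv.finrank_eq, Module.finrank_self]
  -- On the other hand, the dimension of the quotient by a principal ideal is the degree of a norm,
  -- which is never `1`.
  have hfr := finrank_quotient_span_eq_natDegree_norm
    (WeierstrassCurve.Affine.CoordinateRing.basis W) hp0
  rw [Ideal.submodule_span_eq] at hp
  rw [← hp, hfr1] at hfr
  exact WeierstrassCurve.Affine.CoordinateRing.natDegree_norm_ne_one p hfr.symm
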